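/- Fix B ∈ ℝ and let α : J → ℝ be differentiable on an interval J ⊆ (0, π), with cos α(φ) − B sin α(φ) ≠ 0 and α'(φ) = −((sin α(φ) + B cos α(φ))/(cos α(φ) − B sin α(φ))) · cot φ for all φ ∈ J. Then the function φ ↦ sin φ · (sin α(φ) + B cos α(φ)) is constant on J. -/

import Mathlib

/-!
STATEMENT 10: On the sphere, along a characteristic of a quasi-uniform field
with anisotropy B, where α' = −((sin α + B cos α)/(cos α − B sin α)) cot φ,
the quantity sin φ · (sin α + B cos α) is a first integral.
-/

theorem sphere_characteristic_first_integral
    (B : ℝ) (J : Set ℝ) (hJ : J ⊆ Set.Ioo 0 Real.pi) (hJc : Convex ℝ J)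
    (α : ℝ → ℝ)
    (hden : ∀ φ ∈ J, Real.cos (α φ) - B * Real.sin (α φ) ≠ 0)
    (hode : ∀ φ ∈ J, HasDerivAt α
      (-((Real.sin (α φ) + B * Real.cos (α φ)) /
          (Real.cos (α φ) - B * Real.sin (α φ))) * (Real.cos φ / Real.sin φ)) φ) :
    ∀ φ₁ ∈ J, ∀ φ₂ ∈ J,
      Real.sin φ₁ * (Real.sin (α φ₁) + B * Real.cos (α φ₁))
        = Real.sin φ₂ * (Real.sin (α φ₂) + B * Real.cos (α φ₂)) := by
  set F : ℝ → ℝ := fun φ => Real.sin φ * (Real.sin (α φ) + B * Real.cos (α φ)) with hF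
  have key : ∀ φ ∈ J, HasDerivWithinAt F 0 J φ := by
    intro φ hφ
    have hsin : Real.sin φ ≠ 0 :=
      ne_of_gt (Real.sin_pos_of_pos_of_lt_pi (hJ hφ).1 (hJ hφ).2)
    have hα := hode φ hφ
    have hg : HasDerivAt (fun x => Real.sin (α x) + B * Real.cos (α x))
        ((Real.cos (α φ) - B * Real.sin (α φ)) *
          (-((Real.sin (α φ) + B * Real.cos (α φ)) /
            (Real.cos (α φ) - B * Real.sin (α φ))) * (Real.cos φ / Real.sin φ))) φ := by
      have h1 := (Real.hasDerivAt_sin (α φ)).comp φ hα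
      have h2 := ((Real.hasDerivAt_cos (α φ)).comp φ hα).const_mul B
      have := h1.add h2
      refine HasDerivAt.congr_deriv this ?_
      ring
    have hprod := (Real.hasDerivAt_sin φ).mul hg
    have h0 : Real.cos φ * (Real.sin (α φ) + B * Real.cos (α φ)) +
        Real.sin φ * ((Real.cos (α φ) - B * Real.sin (α φ)) *
          (-((Real.sin (α φ) + B * Real.cos (α φ)) /
            (Real.cos (α φ) - B * Real.sin (α φ))) * (Real.cos φ / Real.sin φ))) = 0 := by
      field_simp [hden φ hφ, show Real.cos (α φ) - Real.sin (α φ) * B ≠ 0 by rw [mul_comm]; exact hden φ hφ]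
      ring
    exact (h0 ▸ hprod).hasDerivWithinAt
  intro φ₁ h₁ φ₂ h₂
  have := hJc.norm_image_sub_le_of_norm_hasDerivWithin_le (C := 0) key
    (fun x _ => by simp) h₂ h₁
  simpa [hF] using (norm_sub_eq_zero_iff.mp (le_antisymm (by simpa using this) (norm_nonneg _)))
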